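/- Let F be a linearly ordered field and let M ⊆ M_2(F). Then the following are equivalent: (1) M is a monoid of matrices satisfying det(C^{(m)}) = det(C)^m for all C ∈ M and all positive integers m, and (CD)^{(m)} = C^{(m)}D^{(m)} for all C, D ∈ M and all positive integers m; (2) M is a monoid of matrices with M ⊆ D_2(F) ∪ C_2(F) or M ⊆ D_2(F) ∪ R_2(F), where D_2(F) is the set of diagonal 2×2 matrices over F, R_2(F) is the set of 2×2 matrices over F with at most one nonzero row, and C_2(F) is the set of 2×2 matrices over F with at most one nonzero column. -/

import Mathlib

open Matrix Kronecker

/-- The partial determinant `det₁`: for `A ∈ M_{mn}(F) = M_m(F) ⊗ M_n(F)`,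
`det1 A` is the `n × n` matrix whose `(i,j)` entry is the determinant of the
block `A_{ij} ∈ M_m(F)` given by `(A_{ij})_{kl} = A (k,i) (l,j)`. -/
def det1 {F : Type*} [Field F] {m n : ℕ}
    (A : Matrix (Fin m × Fin n) (Fin m × Fin n) F) : Matrix (Fin n) (Fin n) F :=
  Matrix.of fun i j => Matrix.det (Matrix.of fun k l : Fin m => A (k, i) (l, j))

/-- The `m`-th Hadamard (entrywise) power of a matrix. -/
def hpow {F : Type*} [Monoid F] {n : ℕ} (B : Matrix (Fin n) (Fin n) F) (m : ℕ) :
    Matrix (Fin n) (Fin n) F :=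
  Matrix.of fun i j => (B i j) ^ m

section Aux

variable {F : Type*} [Field F] [LinearOrder F] [IsStrictOrderedRing F]

lemma sum_pow_of_zero {s t : F} (h : s = 0 ∨ t = 0) {m : ℕ} (hm : 0 < m) :
    (s + t) ^ m = s ^ m + t ^ m := by
  rcases h with h | h <;> subst h <;> simp [zero_pow hm.ne']

lemma mul_eq_zero_of_sq {s t : F} (h : (s + t) ^ 2 = s ^ 2 + t ^ 2) : s * t = 0 := by
  have h2 : (2 : F) * (s * t) = 0 := by linear_combination h
  rcases mul_eq_zero.mp h2 with h | h
  · exact absurd h two_ne_zero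
  · exact h

lemma classify (a b c d : F)
    (h00 : a * a * (b * c) = 0)
    (h01 : a * b * (b * d) = 0)
    (h10 : c * a * (d * c) = 0)
    (h11 : c * b * (d * d) = 0)
    (hdet : b * c * (a * d - b * c) = 0) :
    (b = 0 ∧ c = 0) ∨ (b = 0 ∧ d = 0) ∨ (a = 0 ∧ c = 0) ∨ (c = 0 ∧ d = 0) ∨
      (a = 0 ∧ b = 0) := by
  by_cases hb : b = 0 <;> by_cases hc : c = 0
  · exact Or.inl ⟨hb, hc⟩
  · -- b = 0, c ≠ 0
    have had : a * d = 0 := by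
      have h' : a * d * (c * c) = 0 := by linear_combination h10
      rcases mul_eq_zero.mp h' with h | h
      · exact h
      · exact absurd (mul_self_eq_zero.mp h) hc
    rcases mul_eq_zero.mp had with h | h
    · exact Or.inr (Or.inr (Or.inr (Or.inr ⟨h, hb⟩)))
    · exact Or.inr (Or.inl ⟨hb, h⟩)
  · -- c = 0, b ≠ 0
    have had : a * d = 0 := by
      have h' : a * d * (b * b) = 0 := by linear_combination h01
      rcases mul_eq_zero.mp h' with h | h
      · exact h
      · exact absurd (mul_self_eq_zero.mp h) hb
    rcases mul_eq_zero.mp had with h | h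
    · exact Or.inr (Or.inr (Or.inl ⟨h, hc⟩))
    · exact Or.inr (Or.inr (Or.inr (Or.inl ⟨hc, h⟩)))
  · -- b ≠ 0, c ≠ 0 : contradiction
    exfalso
    have ha : a = 0 := by
      have h' : a * a * b * c = 0 := by linear_combination h00
      rcases mul_eq_zero.mp h' with h | h
      · rcases mul_eq_zero.mp h with h | h
        · exact mul_self_eq_zero.mp h
        · exact absurd h hb
      · exact absurd h hc
    have hd : d = 0 := by
      have h' : d * d * b * c = 0 := by linear_combination h11
      rcases mul_eq_zero.mp h' with h | h
      · rcases mul_eq_zero.mp h with h | h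
        · exact mul_self_eq_zero.mp h
        · exact absurd h hb
      · exact absurd h hc
    have hbc : b * c = 0 := by
      have h' : (b * c) * (b * c) = 0 := by
        linear_combination -hdet + (b * c * d) * ha
      exact mul_self_eq_zero.mp h'
    exact (mul_ne_zero hb hc) hbc

/-- A matrix that is diagonal, concentrated on one column, or concentrated on
one row, satisfies the Hadamard–determinant compatibility. -/
lemma det_hpow_of (C : Matrix (Fin 2) (Fin 2) F)
    (h : C.IsDiag ∨ (∃ j, ∀ j', j' ≠ j → ∀ i, C i j' = 0) ∨
      (∃ i, ∀ i', i' ≠ i → ∀ j, C i' j = 0))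
    {m : ℕ} (hm : 0 < m) : (hpow C m).det = C.det ^ m := by
  rcases h with h | ⟨j, hj⟩ | ⟨i, hi⟩
  · have h01 : C 0 1 = 0 := h (by decide)
    have h10 : C 1 0 = 0 := h (by decide)
    simp [Matrix.det_fin_two, hpow, h01, h10, zero_pow hm.ne', mul_pow]
  · fin_cases j
    · have e0 : C 0 1 = 0 := hj 1 (by decide) 0
      have e1 : C 1 1 = 0 := hj 1 (by decide) 1
      simp [Matrix.det_fin_two, hpow, e0, e1, zero_pow hm.ne']
    · have e0 : C 0 0 = 0 := hj 0 (by decide) 0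
      have e1 : C 1 0 = 0 := hj 0 (by decide) 1
      simp [Matrix.det_fin_two, hpow, e0, e1, zero_pow hm.ne']
  · fin_cases i
    · have e0 : C 1 0 = 0 := hi 1 (by decide) 0
      have e1 : C 1 1 = 0 := hi 1 (by decide) 1
      simp [Matrix.det_fin_two, hpow, e0, e1, zero_pow hm.ne']
    · have e0 : C 0 0 = 0 := hi 0 (by decide) 0
      have e1 : C 0 1 = 0 := hi 0 (by decide) 1
      simp [Matrix.det_fin_two, hpow, e0, e1, zero_pow hm.ne']

lemma hpow_mul_left (C D : Matrix (Fin 2) (Fin 2) F)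
    (h : C.IsDiag ∨ ∃ j, ∀ j', j' ≠ j → ∀ i, C i j' = 0)
    {m : ℕ} (hm : 0 < m) : hpow (C * D) m = hpow C m * hpow D m := by
  ext i l
  have key : C i 0 = 0 ∨ C i 1 = 0 := by
    rcases h with h | ⟨j, hj⟩
    · fin_cases i
      · exact Or.inr (h (by decide))
      · exact Or.inl (h (by decide))
    · fin_cases j
      · exact Or.inr (hj 1 (by decide) i)
      · exact Or.inl (hj 0 (by decide) i)
  have hz : C i 0 * D 0 l = 0 ∨ C i 1 * D 1 l = 0 := by
    rcases key with h | h
    · exact Or.inl (by rw [h, zero_mul])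
    · exact Or.inr (by rw [h, zero_mul])
  simp only [hpow, Matrix.mul_apply, Fin.sum_univ_two, Matrix.of_apply]
  rw [sum_pow_of_zero hz hm, mul_pow, mul_pow]

lemma hpow_mul_right (C D : Matrix (Fin 2) (Fin 2) F)
    (h : D.IsDiag ∨ ∃ i, ∀ i', i' ≠ i → ∀ j, D i' j = 0)
    {m : ℕ} (hm : 0 < m) : hpow (C * D) m = hpow C m * hpow D m := by
  ext i l
  have key : D 0 l = 0 ∨ D 1 l = 0 := by
    rcases h with h | ⟨i₀, hi⟩
    · fin_cases l
      · exact Or.inr (h (by decide))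
      · exact Or.inl (h (by decide))
    · fin_cases i₀
      · exact Or.inr (hi 1 (by decide) l)
      · exact Or.inl (hi 0 (by decide) l)
  have hz : C i 0 * D 0 l = 0 ∨ C i 1 * D 1 l = 0 := by
    rcases key with h | h
    · exact Or.inl (by rw [h, mul_zero])
    · exact Or.inr (by rw [h, mul_zero])
  simp only [hpow, Matrix.mul_apply, Fin.sum_univ_two, Matrix.of_apply]
  rw [sum_pow_of_zero hz hm, mul_pow, mul_pow]

end Aux

/-- Characterization of monoids of `2 × 2` matrices over a linearly ordered
field on which the Hadamard power and determinant are compatible: they are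
exactly the monoids contained in `D₂(F) ∪ C₂(F)` or in `D₂(F) ∪ R₂(F)`. -/
theorem monoid_two_equiv {F : Type*} [Field F] [LinearOrder F] [IsStrictOrderedRing F]
    (M : Set (Matrix (Fin 2) (Fin 2) F)) :
    ((1 : Matrix (Fin 2) (Fin 2) F) ∈ M ∧ (∀ C ∈ M, ∀ D ∈ M, C * D ∈ M) ∧
      (∀ C ∈ M, ∀ m : ℕ, 0 < m → (hpow C m).det = C.det ^ m) ∧
      (∀ C ∈ M, ∀ D ∈ M, ∀ m : ℕ, 0 < m → hpow (C * D) m = hpow C m * hpow D m)) ↔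
    ((1 : Matrix (Fin 2) (Fin 2) F) ∈ M ∧ (∀ C ∈ M, ∀ D ∈ M, C * D ∈ M) ∧
      ((∀ C ∈ M, C.IsDiag ∨ ∃ j, ∀ j', j' ≠ j → ∀ i, C i j' = 0) ∨
       (∀ C ∈ M, C.IsDiag ∨ ∃ i, ∀ i', i' ≠ i → ∀ j, C i' j = 0))) := by
  constructor
  · rintro ⟨h1, h2, h3, h4⟩
    refine ⟨h1, h2, ?_⟩
    -- Step 1: each C in M is diagonal, one-column, or one-row
    have key : ∀ C ∈ M, C.IsDiag ∨ (∃ j, ∀ j', j' ≠ j → ∀ i, C i j' = 0) ∨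
        (∃ i, ∀ i', i' ≠ i → ∀ j, C i' j = 0) := by
      intro C hC
      have hsq := h4 C hC C hC 2 two_pos
      have e : ∀ i l : Fin 2,
          (C i 0 * C 0 l) * (C i 1 * C 1 l) = 0 := by
        intro i l
        have h' : hpow (C * C) 2 i l = (hpow C 2 * hpow C 2) i l := by rw [hsq]
        simp only [hpow, Matrix.mul_apply, Fin.sum_univ_two, Matrix.of_apply] at h'
        rw [← mul_pow, ← mul_pow] at h'
        exact mul_eq_zero_of_sq h'
      have hdet := h3 C hC 2 two_pos
      simp only [Matrix.det_fin_two, hpow, Matrix.of_apply] at hdet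
      have hd : C 0 1 * C 1 0 * (C 0 0 * C 1 1 - C 0 1 * C 1 0) = 0 := by
        have h2' : (2 : F) * (C 0 1 * C 1 0 * (C 0 0 * C 1 1 - C 0 1 * C 1 0)) = 0 := by
          linear_combination hdet
        rcases mul_eq_zero.mp h2' with h | h
        · exact absurd h two_ne_zero
        · exact h
      have h00 := e 0 0
      have h01 := e 0 1
      have h10 := e 1 0
      have h11 := e 1 1
      rcases classify (C 0 0) (C 0 1) (C 1 0) (C 1 1)
          (by linear_combination h00) (by linear_combination h01)
          (by linear_combination h10) (by linear_combination h11) hd with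
        ⟨hb, hc⟩ | ⟨hb, hd'⟩ | ⟨ha, hc⟩ | ⟨hc, hd'⟩ | ⟨ha, hb⟩
      · -- diagonal
        left
        intro i j hij
        fin_cases i <;> fin_cases j <;> simp_all
      · -- column 0
        right; left
        refine ⟨0, ?_⟩
        intro j' hj' i
        have : j' = 1 := by omega
        subst this
        fin_cases i <;> assumption
      · -- column 1
        right; left
        refine ⟨1, ?_⟩
        intro j' hj' i
        have : j' = 0 := by omega
        subst this
        fin_cases i <;> assumption
      · -- row 0
        right; right
        refine ⟨0, ?_⟩
        intro i' hi' j
        have : i' = 1 := by omega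
        subst this
        fin_cases j <;> assumption
      · -- row 1
        right; right
        refine ⟨1, ?_⟩
        intro i' hi' j
        have : i' = 0 := by omega
        subst this
        fin_cases j <;> assumption
    -- Step 2: uniformity
    by_cases hcol : ∀ C ∈ M, C.IsDiag ∨ ∃ j, ∀ j', j' ≠ j → ∀ i, C i j' = 0
    · exact Or.inl hcol
    · right
      rw [not_forall] at hcol
      obtain ⟨C₀, hcol⟩ := hcol
      rw [Classical.not_imp, not_or] at hcol
      obtain ⟨hC₀M, hC₀d, hC₀c⟩ := hcol
      obtain ⟨i₀, hrow⟩ : ∃ i, ∀ i', i' ≠ i → ∀ j, C₀ i' j = 0 := by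
        rcases key C₀ hC₀M with h | h | h
        · exact absurd h hC₀d
        · exact absurd h hC₀c
        · exact h
      have hx : C₀ i₀ 0 ≠ 0 := by
        intro hx0
        apply hC₀c
        refine ⟨1, ?_⟩
        intro j' hj' i
        have : j' = 0 := by omega
        subst this
        by_cases hi : i = i₀
        · subst hi; exact hx0
        · exact hrow i hi 0
      have hy : C₀ i₀ 1 ≠ 0 := by
        intro hy0
        apply hC₀c
        refine ⟨0, ?_⟩
        intro j' hj' i
        have : j' = 1 := by omega
        subst this
        by_cases hi : i = i₀
        · subst hi; exact hy0
        · exact hrow i hi 1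
      intro D hD
      rcases key D hD with h | ⟨j₀, hcolD⟩ | h
      · exact Or.inl h
      · -- D concentrated on column j₀
        by_cases hu : D 0 j₀ = 0
        · right
          refine ⟨1, ?_⟩
          intro i' hi' j
          have : i' = 0 := by omega
          subst this
          by_cases hj : j = j₀
          · subst hj; exact hu
          · exact hcolD j hj 0
        by_cases hv : D 1 j₀ = 0
        · right
          refine ⟨0, ?_⟩
          intro i' hi' j
          have : i' = 1 := by omega
          subst this
          by_cases hj : j = j₀
          · subst hj; exact hv
          · exact hcolD j hj 1
        -- both nonzero: contradiction
        exfalso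
        have hsq := h4 C₀ hC₀M D hD 2 two_pos
        have h' : hpow (C₀ * D) 2 i₀ j₀ = (hpow C₀ 2 * hpow D 2) i₀ j₀ := by rw [hsq]
        simp only [hpow, Matrix.mul_apply, Fin.sum_univ_two, Matrix.of_apply] at h'
        rw [← mul_pow, ← mul_pow] at h'
        have := mul_eq_zero_of_sq h'
        rcases mul_eq_zero.mp this with h | h
        · rcases mul_eq_zero.mp h with h | h
          · exact hx h
          · exact hu h
        · rcases mul_eq_zero.mp h with h | h
          · exact hy h
          · exact hv h
      · exact Or.inr h
  · rintro ⟨h1, h2, hstruct⟩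
    refine ⟨h1, h2, ?_, ?_⟩
    · intro C hC m hm
      refine det_hpow_of C ?_ hm
      rcases hstruct with hs | hs
      · rcases hs C hC with h | h
        · exact Or.inl h
        · exact Or.inr (Or.inl h)
      · rcases hs C hC with h | h
        · exact Or.inl h
        · exact Or.inr (Or.inr h)
    · intro C hC D hD m hm
      rcases hstruct with hs | hs
      · exact hpow_mul_left C D (hs C hC) hm
      · exact hpow_mul_right C D (hs D hD) hm
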